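/- Let k be a field, X a finite set, V the k-vector space with basis (e_x)_{x∈X}, and H a subgroup of GL(V) containing all invertible diagonal maps (e_x ↦ u_x e_x with all u_x ≠ 0). Define the preorder pre(H) on X by: x pre(H) y iff every subset Y ⊆ X with ⟨Y⟩ invariant under all elements of H and with x ∈ Y also contains y. Then for every preorder ≤ on X: H ⊆ GL_≥(X) if and only if pre(H) ⪯ ≤ (i.e., x pre(H) y implies x ≤ y for all x, y). -/

import Mathlib

/-- Let `X` be a finite set, `V` a `k`-vector space with basis `(e_x)_{x ∈ X}`, and
`H` a subgroup of `GL(V)` containing all invertible diagonal maps (with respect to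
the basis). For the preorder `pre(H)` on `X` defined by: `x pre(H) y` iff every
subset `Y ⊆ X` whose span is `H`-invariant and which contains `x` also contains
`y`, we have, for every preorder `r` on `X`:
`H ⊆ GL_≥(X)` if and only if `pre(H) ⪯ r`. -/
theorem galois_correspondence_subgroups_preorders
    {k V X : Type*} [Field k] [AddCommGroup V] [Module k V] [Finite X]
    (b : Module.Basis X k V) (H : Subgroup (V ≃ₗ[k] V))
    (hdiag : ∀ u : X → kˣ, ∃ g ∈ H, ∀ x : X, g (b x) = (u x : k) • b x)
    (r : X → X → Prop) (hrefl : Reflexive r) (htrans : Transitive r) :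
    ((H : Set (V ≃ₗ[k] V)) ⊆ {g | ∀ x : X,
        (Submodule.span k (b '' {y | r x y})).map (g : V →ₗ[k] V) ≤
          Submodule.span k (b '' {y | r x y})})
      ↔ ∀ x y : X,
          (∀ Y : Set X,
            (∀ g ∈ H, (Submodule.span k (b '' Y)).map (g : V →ₗ[k] V) ≤
                Submodule.span k (b '' Y)) →
            x ∈ Y → y ∈ Y) →
          r x y := by
  constructor
  · intro h x y hxy
    exact hxy {y | r x y} (fun g hg => h hg x) (hrefl x)
  · intro h g hg x
    rw [Submodule.map_span_le]
    rintro v ⟨z, hz, rfl⟩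
    rw [b.mem_span_image]
    intro w hw
    refine htrans hz (h z w fun Y hY hzY => ?_)
    have h1 : (g : V →ₗ[k] V) (b z) ∈ Submodule.span k (b '' Y) :=
      hY g hg ⟨b z, Submodule.subset_span ⟨z, hzY, rfl⟩, rfl⟩
    exact b.mem_span_image.mp h1 hw
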